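/- Let n ≥ 2 and let M = [m_{ij}] be an n×n real B-Nekrasov matrix with decomposition M = B⁺ + C, and let D = diag(d_1,…,d_n) with 0 ≤ d_i ≤ 1 for all i. Then the matrices I − D + DM and I − D + DB⁺ are invertible and ‖(I − D + DM)^{-1}‖_∞ ≤ (n − 1) ‖(I − D + DB⁺)^{-1}‖_∞. -/

import Mathlib

open Finset

noncomputable def nekH {n : ℕ} {𝕜 : Type*} [RCLike 𝕜] (A : Matrix (Fin n) (Fin n) 𝕜) : Fin n → ℝ
  | i =>
    (∑ j : Fin n, if h : j < i then ‖A i j‖ / ‖A j j‖ * nekH A j else 0)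
      + ∑ j : Fin n, if i < j then ‖A i j‖ else 0
termination_by i => i.val
decreasing_by exact h

def IsNekrasov {n : ℕ} {𝕜 : Type*} [RCLike 𝕜] (A : Matrix (Fin n) (Fin n) 𝕜) : Prop :=
  ∀ i, nekH A i < ‖A i i‖

noncomputable def nekZ {n : ℕ} {𝕜 : Type*} [RCLike 𝕜] (A : Matrix (Fin n) (Fin n) 𝕜) : Fin n → ℝ
  | i => (∑ j : Fin n, if h : j < i then ‖A i j‖ / ‖A j j‖ * nekZ A j else 0) + 1
termination_by i => i.val
decreasing_by exact h

noncomputable def nekEta {n : ℕ} {𝕜 : Type*} [RCLike 𝕜] (M : Matrix (Fin n) (Fin n) 𝕜) : Fin n → ℝ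
  | i => (∑ j : Fin n, if h : j < i then ‖M i j‖ / min ‖M j j‖ 1 * nekEta M j else 0) + 1
termination_by i => i.val
decreasing_by exact h

noncomputable def linftyNorm {n : ℕ} {𝕜 : Type*} [RCLike 𝕜] (A : Matrix (Fin n) (Fin n) 𝕜) : ℝ :=
  ⨆ i, ∑ j, ‖A i j‖

noncomputable def rPlus {n : ℕ} (M : Matrix (Fin n) (Fin n) ℝ) (i : Fin n) : ℝ :=
  Finset.fold max 0 (fun j => M i j) (Finset.univ.erase i)

noncomputable def BPlus {n : ℕ} (M : Matrix (Fin n) (Fin n) ℝ) : Matrix (Fin n) (Fin n) ℝ :=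
  Matrix.of fun i j => M i j - rPlus M i

def IsBNekrasov {n : ℕ} (M : Matrix (Fin n) (Fin n) ℝ) : Prop :=
  IsNekrasov (BPlus M) ∧ ∀ i, 0 < BPlus M i i

def IsLCPSolution {n : ℕ} (M : Matrix (Fin n) (Fin n) ℝ) (q x : Fin n → ℝ) : Prop :=
  (∀ i, 0 ≤ x i) ∧ (∀ i, 0 ≤ (M.mulVec x + q) i) ∧ ∑ i, (M.mulVec x + q) i * x i = 0

def IsPMatrix {n : ℕ} (M : Matrix (Fin n) (Fin n) ℝ) : Prop :=
  ∀ S : Finset (Fin n), 0 < (M.submatrix (fun i : S => (i : Fin n)) (fun j : S => (j : Fin n))).det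



lemma finStrongInd {n : ℕ} {P : Fin n → Prop} (h : ∀ i, (∀ j, j < i → P j) → P i) : ∀ i, P i :=
  fun i => (measure (fun k : Fin n => k.val)).wf.fix (fun i ih => h i (fun j hj => ih j hj)) i

lemma nekH_eq {n : ℕ} {𝕜 : Type*} [RCLike 𝕜] (A : Matrix (Fin n) (Fin n) 𝕜) (i : Fin n) :
    nekH A i = (∑ j : Fin n, if _ : j < i then ‖A i j‖ / ‖A j j‖ * nekH A j else 0)
      + ∑ j : Fin n, if i < j then ‖A i j‖ else 0 := by
  rw [nekH]

lemma nekZ_eq {n : ℕ} {𝕜 : Type*} [RCLike 𝕜] (A : Matrix (Fin n) (Fin n) 𝕜) (i : Fin n) :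
    nekZ A i = (∑ j : Fin n, if _ : j < i then ‖A i j‖ / ‖A j j‖ * nekZ A j else 0) + 1 := by
  rw [nekZ]

lemma nekH_nonneg {n : ℕ} {𝕜 : Type*} [RCLike 𝕜] (A : Matrix (Fin n) (Fin n) 𝕜) :
    ∀ i, 0 ≤ nekH A i := by
  refine finStrongInd (fun i ih => ?_)
  rw [nekH_eq]
  refine add_nonneg (Finset.sum_nonneg fun j _ => ?_) (Finset.sum_nonneg fun j _ => ?_) <;>
    split <;> first
      | positivity
      | exact mul_nonneg (div_nonneg (norm_nonneg _) (norm_nonneg _)) (ih _ (by assumption))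

lemma nekZ_one_le {n : ℕ} {𝕜 : Type*} [RCLike 𝕜] (A : Matrix (Fin n) (Fin n) 𝕜) :
    ∀ i, 1 ≤ nekZ A i := by
  refine finStrongInd (fun i ih => ?_)
  rw [nekZ_eq]
  have : (0:ℝ) ≤ ∑ j : Fin n, if _ : j < i then ‖A i j‖ / ‖A j j‖ * nekZ A j else 0 := by
    refine Finset.sum_nonneg fun j _ => ?_
    split
    · exact mul_nonneg (div_nonneg (norm_nonneg _) (norm_nonneg _))
        (le_trans zero_le_one (ih _ (by assumption)))
    · exact le_refl 0
  linarith

lemma nekZ_pos {n : ℕ} {𝕜 : Type*} [RCLike 𝕜] (A : Matrix (Fin n) (Fin n) 𝕜) (i : Fin n) :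
    0 < nekZ A i := lt_of_lt_of_le zero_lt_one (nekZ_one_le A i)

/-- splitting a sum over `erase i` into below/above parts -/
lemma sum_erase_split {n : ℕ} (i : Fin n) (f : Fin n → ℝ) :
    ∑ j ∈ Finset.univ.erase i, f j
      = (∑ j : Fin n, if j < i then f j else 0) + ∑ j : Fin n, if i < j then f j else 0 := by
  rw [← Finset.sum_add_distrib]
  rw [Finset.sum_erase_eq_sub (Finset.mem_univ i)]
  have : ∀ j : Fin n, ((if j < i then f j else 0) + if i < j then f j else 0)
      = f j - (if j = i then f j else 0) := by
    intro j
    rcases lt_trichotomy j i with h | h | h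
    · simp [h, not_lt_of_gt h, ne_of_lt h, h.ne]
    · simp [h]
    · simp [h, not_lt_of_gt h, (ne_of_lt h).symm, h.ne']
  rw [Finset.sum_congr rfl (fun j _ => this j), Finset.sum_sub_distrib]
  simp

/-- Nekrasov matrices admit a diagonal scaling to strict diagonal dominance. -/
lemma nekrasov_scaling {n : ℕ} (hn : 0 < n) (A : Matrix (Fin n) (Fin n) ℝ)
    (hA : IsNekrasov A) :
    ∃ w : Fin n → ℝ, (∀ i, 0 < w i ∧ w i ≤ 1) ∧
      ∀ i, ∑ j ∈ Finset.univ.erase i, ‖A i j‖ * w j < ‖A i i‖ * w i := by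
  have hne : (Finset.univ : Finset (Fin n)).Nonempty := by
    have : Nonempty (Fin n) := ⟨⟨0, hn⟩⟩
    exact Finset.univ_nonempty
  set ε := Finset.univ.inf' hne fun i => (‖A i i‖ - nekH A i) / nekZ A i with hεdef
  have hApos : ∀ i, 0 < ‖A i i‖ := fun i => lt_of_le_of_lt (nekH_nonneg A i) (hA i)
  have hε : 0 < ε := by
    rw [hεdef, Finset.lt_inf'_iff]
    exact fun i _ => div_pos (sub_pos.mpr (hA i)) (nekZ_pos A i)
  have hεle : ∀ i, nekH A i + ε * nekZ A i ≤ ‖A i i‖ := by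
    intro i
    have h1 : ε ≤ (‖A i i‖ - nekH A i) / nekZ A i :=
      Finset.inf'_le _ (Finset.mem_univ i)
    have h2 : ε * nekZ A i ≤ ‖A i i‖ - nekH A i := by
      rw [← le_div_iff₀ (nekZ_pos A i)]; exact h1
    linarith
  refine ⟨fun i => (nekH A i + ε * nekZ A i) / ‖A i i‖, fun i => ⟨?_, ?_⟩, ?_⟩
  · exact div_pos (by nlinarith [nekH_nonneg A i, nekZ_one_le A i]) (hApos i)
  · rw [div_le_one (hApos i)]; exact hεle i
  · intro i
    have hw : ∀ j, ‖A j j‖ * ((nekH A j + ε * nekZ A j) / ‖A j j‖) = nekH A j + ε * nekZ A j :=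
      fun j => mul_div_cancel₀ _ (ne_of_gt (hApos j))
    rw [hw i, sum_erase_split]
    have hlow : (∑ j : Fin n, if j < i then ‖A i j‖ * ((nekH A j + ε * nekZ A j) / ‖A j j‖) else 0)
        = (∑ j : Fin n, if _ : j < i then ‖A i j‖ / ‖A j j‖ * nekH A j else 0)
          + ε * ((∑ j : Fin n, if _ : j < i then ‖A i j‖ / ‖A j j‖ * nekZ A j else 0)) := by
      rw [Finset.mul_sum, ← Finset.sum_add_distrib]
      refine Finset.sum_congr rfl fun j _ => ?_
      split
      · field_simp
      · simp
    have hup : (∑ j : Fin n, if i < j then ‖A i j‖ * ((nekH A j + ε * nekZ A j) / ‖A j j‖) else 0)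
        ≤ ∑ j : Fin n, if i < j then ‖A i j‖ else 0 := by
      refine Finset.sum_le_sum fun j _ => ?_
      split
      · refine mul_le_of_le_one_right (norm_nonneg _) ?_
        rw [div_le_one (hApos j)]; exact hεle j
      · exact le_refl 0
    have key : (∑ j : Fin n, if j < i then ‖A i j‖ * ((nekH A j + ε * nekZ A j) / ‖A j j‖) else 0)
        + (∑ j : Fin n, if i < j then ‖A i j‖ * ((nekH A j + ε * nekZ A j) / ‖A j j‖) else 0)
        ≤ nekH A i + ε * (nekZ A i - 1) := by
      rw [hlow]
      have h1 := nekH_eq A i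
      have h2 := nekZ_eq A i
      have : (∑ j : Fin n, if _ : j < i then ‖A i j‖ / ‖A j j‖ * nekZ A j else 0)
          = nekZ A i - 1 := by rw [h2]; ring
      rw [this]
      have : (∑ j : Fin n, if _ : j < i then ‖A i j‖ / ‖A j j‖ * nekH A j else 0)
          = nekH A i - ∑ j : Fin n, if i < j then ‖A i j‖ else 0 := by rw [h1]; ring
      rw [this]
      linarith [hup]
    have : nekH A i + ε * (nekZ A i - 1) < nekH A i + ε * nekZ A i := by nlinarith
    linarith

lemma sdd_unit_inv_nonneg {n : ℕ} (A : Matrix (Fin n) (Fin n) ℝ)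
    (hdiag : ∀ i, 0 < A i i) (hoff : ∀ i j, i ≠ j → A i j ≤ 0)
    (hsdd : ∀ i, ∑ j ∈ Finset.univ.erase i, |A i j| < A i i) :
    IsUnit A.det ∧ ∀ i j, 0 ≤ A⁻¹ i j := by
  have hdet : A.det ≠ 0 := by
    refine det_ne_zero_of_sum_row_lt_diag fun k => ?_
    have : ‖A k k‖ = A k k := by rw [Real.norm_eq_abs, abs_of_pos (hdiag k)]
    rw [this]
    simpa [Real.norm_eq_abs] using hsdd k
  have hunit : IsUnit A.det := isUnit_iff_ne_zero.mpr hdet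
  refine ⟨hunit, fun i j => ?_⟩
  by_contra hneg
  push_neg at hneg
  set x : Fin n → ℝ := fun k => A⁻¹ k j with hx
  obtain ⟨i₀, -, hmin⟩ := Finset.exists_min_image Finset.univ x ⟨i, Finset.mem_univ i⟩
  have hmin' : ∀ k, x i₀ ≤ x k := fun k => hmin k (Finset.mem_univ k)
  have hxi₀ : x i₀ < 0 := lt_of_le_of_lt (hmin' i) hneg
  have hAx : A.mulVec x i₀ = (1 : Matrix (Fin n) (Fin n) ℝ) i₀ j := by
    have h1 : A * A⁻¹ = 1 := Matrix.mul_nonsing_inv A hunit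
    calc A.mulVec x i₀ = ∑ k, A i₀ k * A⁻¹ k j := by
          simp [Matrix.mulVec, dotProduct, hx]
      _ = (A * A⁻¹) i₀ j := by rw [Matrix.mul_apply]
      _ = (1 : Matrix (Fin n) (Fin n) ℝ) i₀ j := by rw [h1]
  have hge : (0:ℝ) ≤ A.mulVec x i₀ := by
    rw [hAx, Matrix.one_apply]
    split <;> norm_num
  have hrowpos : 0 < ∑ k, A i₀ k := by
    have h1 : ∑ k ∈ Finset.univ.erase i₀, A i₀ k = -∑ k ∈ Finset.univ.erase i₀, |A i₀ k| := by
      rw [← Finset.sum_neg_distrib]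
      refine Finset.sum_congr rfl fun k hk => ?_
      rw [abs_of_nonpos (hoff i₀ k (Finset.ne_of_mem_erase hk).symm)]
      ring
    have h2 : ∑ k, A i₀ k = A i₀ i₀ + ∑ k ∈ Finset.univ.erase i₀, A i₀ k :=
      (Finset.add_sum_erase _ _ (Finset.mem_univ i₀)).symm
    rw [h2, h1]
    linarith [hsdd i₀]
  have hle : A.mulVec x i₀ ≤ (∑ k, A i₀ k) * x i₀ := by
    rw [Finset.sum_mul]
    simp only [Matrix.mulVec, dotProduct]
    refine Finset.sum_le_sum fun k _ => ?_
    rcases eq_or_ne k i₀ with rfl | hk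
    · exact le_refl _
    · exact mul_le_mul_of_nonpos_left (hmin' k) (hoff i₀ k (Ne.symm hk))
  nlinarith

lemma nekrasov_unit_inv_nonneg {n : ℕ} (hn : 0 < n) (A : Matrix (Fin n) (Fin n) ℝ)
    (hA : IsNekrasov A) (hdiag : ∀ i, 0 < A i i) (hoff : ∀ i j, i ≠ j → A i j ≤ 0) :
    IsUnit A.det ∧ ∀ i j, 0 ≤ A⁻¹ i j := by
  obtain ⟨w, hw, hsdd⟩ := nekrasov_scaling hn A hA
  set W := Matrix.diagonal w with hW
  have hAW : ∀ i j, (A * W) i j = A i j * w j := by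
    intro i j; rw [hW, Matrix.mul_diagonal]
  have habs : ∀ i j, |(A * W) i j| = |A i j| * w j := by
    intro i j; rw [hAW, abs_mul, abs_of_pos (hw j).1]
  have hAWdiag : ∀ i, 0 < (A * W) i i := fun i => by
    rw [hAW]; exact mul_pos (hdiag i) (hw i).1
  have hAWoff : ∀ i j, i ≠ j → (A * W) i j ≤ 0 := fun i j hij => by
    rw [hAW]; exact mul_nonpos_of_nonpos_of_nonneg (hoff i j hij) (hw j).1.le
  have hAWsdd : ∀ i, ∑ j ∈ Finset.univ.erase i, |(A * W) i j| < (A * W) i i := by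
    intro i
    rw [hAW]
    calc ∑ j ∈ Finset.univ.erase i, |(A * W) i j|
        = ∑ j ∈ Finset.univ.erase i, ‖A i j‖ * w j := by
          refine Finset.sum_congr rfl fun j _ => ?_
          rw [habs, Real.norm_eq_abs]
      _ < ‖A i i‖ * w i := hsdd i
      _ = A i i * w i := by rw [Real.norm_eq_abs, abs_of_pos (hdiag i)]
  obtain ⟨hAWunit, hAWinv⟩ := sdd_unit_inv_nonneg (A * W) hAWdiag hAWoff hAWsdd
  have hunit : IsUnit A.det := by
    rw [Matrix.det_mul] at hAWunit
    exact (IsUnit.mul_iff.mp hAWunit).1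
  refine ⟨hunit, fun i j => ?_⟩
  have hright : A * (W * (A * W)⁻¹) = 1 := by
    rw [← Matrix.mul_assoc]
    exact Matrix.mul_nonsing_inv _ hAWunit
  have hinv : A⁻¹ = W * (A * W)⁻¹ := Matrix.inv_eq_right_inv hright
  rw [hinv, hW, Matrix.diagonal_mul]
  exact mul_nonneg (hw i).1.le (hAWinv i j)

lemma tilde_entry_ne {n : ℕ} (B : Matrix (Fin n) (Fin n) ℝ) (d : Fin n → ℝ) {i j : Fin n}
    (hij : i ≠ j) : (1 - Matrix.diagonal d + Matrix.diagonal d * B) i j = d i * B i j := by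
  simp [Matrix.sub_apply, Matrix.add_apply, Matrix.one_apply_ne hij,
    Matrix.diagonal_apply_ne _ hij, Matrix.diagonal_mul]

lemma tilde_entry_eq {n : ℕ} (B : Matrix (Fin n) (Fin n) ℝ) (d : Fin n → ℝ) (i : Fin n) :
    (1 - Matrix.diagonal d + Matrix.diagonal d * B) i i = 1 - d i + d i * B i i := by
  simp [Matrix.sub_apply, Matrix.add_apply, Matrix.one_apply_eq,
    Matrix.diagonal_apply_eq, Matrix.diagonal_mul]

lemma tilde_facts {n : ℕ} (B : Matrix (Fin n) (Fin n) ℝ) (hB : IsNekrasov B)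
    (hBd : ∀ i, 0 < B i i) (d : Fin n → ℝ) (hd : ∀ i, 0 ≤ d i ∧ d i ≤ 1) :
    (∀ i, 0 < (1 - Matrix.diagonal d + Matrix.diagonal d * B) i i) ∧
      IsNekrasov (1 - Matrix.diagonal d + Matrix.diagonal d * B) := by
  set A := 1 - Matrix.diagonal d + Matrix.diagonal d * B with hA
  have hBnorm : ∀ i, nekH B i < B i i := by
    intro i
    have := hB i
    rwa [Real.norm_eq_abs, abs_of_pos (hBd i)] at this
  have hdiag : ∀ i, 0 < A i i := by
    intro i
    rw [hA, tilde_entry_eq]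
    rcases eq_or_lt_of_le (hd i).2 with h | h
    · rw [h]; simpa using hBd i
    · nlinarith [(hd i).1, hBd i, mul_nonneg (hd i).1 (hBd i).le]
  have hQ : ∀ i, nekH A i ≤ d i * nekH B i := by
    refine finStrongInd fun i ih => ?_
    have hratio : ∀ j, j < i → nekH A j / A j j ≤ nekH B j / B j j := by
      intro j hj
      rw [div_le_div_iff₀ (hdiag j) (hBd j)]
      have h1 : nekH A j * B j j ≤ d j * nekH B j * B j j :=
        mul_le_mul_of_nonneg_right (ih j hj) (hBd j).le
      have h2 : d j * B j j ≤ A j j := by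
        rw [hA, tilde_entry_eq]
        linarith [(hd j).2]
      calc nekH A j * B j j ≤ d j * nekH B j * B j j := h1
        _ = nekH B j * (d j * B j j) := by ring
        _ ≤ nekH B j * A j j := mul_le_mul_of_nonneg_left h2 (nekH_nonneg B j)
    rw [nekH_eq, nekH_eq B i, mul_add, Finset.mul_sum, Finset.mul_sum]
    refine add_le_add (Finset.sum_le_sum fun j _ => ?_) (Finset.sum_le_sum fun j _ => ?_)
    · rcases lt_or_ge j i with hj | hj
      · simp only [dif_pos hj]
        have hAij : ‖A i j‖ = d i * ‖B i j‖ := by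
          rw [hA, tilde_entry_ne B d (ne_of_gt hj), Real.norm_eq_abs, Real.norm_eq_abs,
            abs_mul, abs_of_nonneg (hd i).1]
        have hAjj : ‖A j j‖ = A j j := by
          rw [Real.norm_eq_abs, abs_of_pos (hdiag j)]
        rw [hAij, hAjj]
        have hBjj : ‖B j j‖ = B j j := by
          rw [Real.norm_eq_abs, abs_of_pos (hBd j)]
        rw [hBjj]
        have hkey : ‖B i j‖ / A j j * nekH A j ≤ ‖B i j‖ / B j j * nekH B j := by
          rw [div_mul_eq_mul_div, div_mul_eq_mul_div, mul_div_assoc, mul_div_assoc]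
          exact mul_le_mul_of_nonneg_left (hratio j hj) (norm_nonneg _)
        calc d i * ‖B i j‖ / A j j * nekH A j
            = d i * (‖B i j‖ / A j j * nekH A j) := by ring
          _ ≤ d i * (‖B i j‖ / B j j * nekH B j) :=
              mul_le_mul_of_nonneg_left hkey (hd i).1
      · simp only [dif_neg (not_lt.mpr hj)]; simp
    · rcases lt_or_ge i j with hj | hj
      · simp only [if_pos hj]
        rw [hA, tilde_entry_ne B d (ne_of_lt hj), Real.norm_eq_abs, Real.norm_eq_abs,
          abs_mul, abs_of_nonneg (hd i).1]
      · simp only [if_neg (not_lt.mpr hj), mul_zero, le_refl]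
  refine ⟨hdiag, fun i => ?_⟩
  have h1 : nekH A i ≤ d i * nekH B i := hQ i
  have h2 : ‖A i i‖ = A i i := by rw [Real.norm_eq_abs, abs_of_pos (hdiag i)]
  have h3 : A i i = 1 - d i + d i * B i i := tilde_entry_eq B d i
  show nekH A i < ‖A i i‖
  rw [h2, h3]
  rcases eq_or_lt_of_le (hd i).2 with h | h
  · rw [h] at h1 ⊢
    nlinarith [hBnorm i]
  · nlinarith [(hd i).1, hBnorm i, nekH_nonneg B i,
      mul_nonneg (hd i).1 (sub_pos.mpr (hBnorm i)).le]

lemma row_le_linftyNorm {n : ℕ} {𝕜 : Type*} [RCLike 𝕜] (A : Matrix (Fin n) (Fin n) 𝕜)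
    (i : Fin n) : ∑ j, ‖A i j‖ ≤ linftyNorm A :=
  le_ciSup (f := fun i => ∑ j, ‖A i j‖) (Set.Finite.bddAbove (Set.finite_range _)) i

lemma linftyNorm_le {n : ℕ} {𝕜 : Type*} [RCLike 𝕜] [NeZero n] (A : Matrix (Fin n) (Fin n) 𝕜)
    {c : ℝ} (h : ∀ i, ∑ j, ‖A i j‖ ≤ c) : linftyNorm A ≤ c :=
  ciSup_le h

lemma linftyNorm_nonneg {n : ℕ} {𝕜 : Type*} [RCLike 𝕜] [NeZero n]
    (A : Matrix (Fin n) (Fin n) 𝕜) : 0 ≤ linftyNorm A := by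
  have i : Fin n := ⟨0, Nat.pos_of_ne_zero (NeZero.ne n)⟩
  exact le_trans (Finset.sum_nonneg fun j _ => norm_nonneg _) (row_le_linftyNorm A i)

lemma linftyNorm_mul_le {n : ℕ} [NeZero n] (P N : Matrix (Fin n) (Fin n) ℝ) :
    linftyNorm (P * N) ≤ linftyNorm P * linftyNorm N := by
  refine linftyNorm_le _ fun i => ?_
  calc ∑ j, ‖(P * N) i j‖
      ≤ ∑ j, ∑ k, ‖P i k‖ * ‖N k j‖ := by
        refine Finset.sum_le_sum fun j _ => ?_
        rw [Matrix.mul_apply]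
        refine le_trans (norm_sum_le _ _) (le_of_eq ?_)
        simp [norm_mul]
    _ = ∑ k, ‖P i k‖ * ∑ j, ‖N k j‖ := by
        rw [Finset.sum_comm]
        simp [Finset.mul_sum]
    _ ≤ ∑ k, ‖P i k‖ * linftyNorm N := by
        refine Finset.sum_le_sum fun k _ => ?_
        exact mul_le_mul_of_nonneg_left (row_le_linftyNorm N k) (norm_nonneg _)
    _ = (∑ k, ‖P i k‖) * linftyNorm N := by rw [Finset.sum_mul]
    _ ≤ linftyNorm P * linftyNorm N :=
        mul_le_mul_of_nonneg_right (row_le_linftyNorm P i) (linftyNorm_nonneg N)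


theorem stmt11 {n : ℕ} (hn : 2 ≤ n) (M : Matrix (Fin n) (Fin n) ℝ)
    (hBN : IsBNekrasov M)
    (d : Fin n → ℝ) (hd : ∀ i, 0 ≤ d i ∧ d i ≤ 1) :
    IsUnit (1 - Matrix.diagonal d + Matrix.diagonal d * M).det ∧
      IsUnit (1 - Matrix.diagonal d + Matrix.diagonal d * BPlus M).det ∧
      linftyNorm (1 - Matrix.diagonal d + Matrix.diagonal d * M)⁻¹ ≤
        (n - 1 : ℝ) * linftyNorm (1 - Matrix.diagonal d + Matrix.diagonal d * BPlus M)⁻¹ := by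
  obtain ⟨hBnek, hBdiag⟩ := hBN
  have hnpos : 0 < n := by omega
  haveI : NeZero n := ⟨by omega⟩
  set B := BPlus M with hBdef
  have hr0 : ∀ i, 0 ≤ rPlus M i := by
    intro i
    rw [rPlus, Finset.le_fold_max]
    exact Or.inl le_rfl
  have hrge : ∀ i j, j ≠ i → M i j ≤ rPlus M i := by
    intro i j h
    rw [rPlus, Finset.le_fold_max]
    exact Or.inr ⟨j, Finset.mem_erase.mpr ⟨h, Finset.mem_univ _⟩, le_rfl⟩
  have hBapp : ∀ i j, B i j = M i j - rPlus M i := fun i j => rfl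
  have hBoff : ∀ i j, i ≠ j → B i j ≤ 0 := by
    intro i j h
    rw [hBapp]
    linarith [hrge i j h.symm]
  set T := 1 - Matrix.diagonal d + Matrix.diagonal d * M with hTdef
  set A := 1 - Matrix.diagonal d + Matrix.diagonal d * B with hAdef
  obtain ⟨hAdiag, hAnek⟩ := tilde_facts B hBnek hBdiag d hd
  have hAoff : ∀ i j, i ≠ j → A i j ≤ 0 := fun i j h => by
    rw [hAdef, tilde_entry_ne B d h]
    exact mul_nonpos_of_nonneg_of_nonpos (hd i).1 (hBoff i j h)
  obtain ⟨hAunit, hAinv⟩ := nekrasov_unit_inv_nonneg hnpos A hAnek hAdiag hAoff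
  set N := A⁻¹ with hNdef
  have hAN : A * N = 1 := Matrix.mul_nonsing_inv A hAunit
  set c : Fin n → ℝ := fun i => d i * rPlus M i with hcdef
  have hc : ∀ i, 0 ≤ c i := fun i => mul_nonneg (hd i).1 (hr0 i)
  set u : Fin n → ℝ := N.mulVec c with hudef
  have hu : ∀ i, 0 ≤ u i := by
    intro i
    rw [hudef]
    simp only [Matrix.mulVec, dotProduct]
    exact Finset.sum_nonneg fun j _ => mul_nonneg (hAinv i j) (hc j)
  set σ : ℝ := ∑ i, u i with hσdef
  have hσ : 0 ≤ σ := Finset.sum_nonneg fun i _ => hu i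
  have h1σ : (0:ℝ) < 1 + σ := by linarith
  set t : ℝ := (1 + σ)⁻¹ with htdef
  have ht : t * (1 + σ) = 1 := inv_mul_cancel₀ (ne_of_gt h1σ)
  have ht0 : 0 ≤ t := inv_nonneg.mpr h1σ.le
  have huσ : ∀ i, u i ≤ σ := fun i =>
    Finset.single_le_sum (fun j _ => hu j) (Finset.mem_univ i)
  have htu1 : ∀ i, t * u i ≤ 1 := by
    intro i
    have h1 : t * u i ≤ t * σ := mul_le_mul_of_nonneg_left (huσ i) ht0
    nlinarith
  have htu0 : ∀ i, 0 ≤ t * u i := fun i => mul_nonneg ht0 (hu i)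
  set U : Matrix (Fin n) (Fin n) ℝ := Matrix.of fun i _ => u i with hUdef
  set P : Matrix (Fin n) (Fin n) ℝ :=
    Matrix.of fun i j => (if i = j then 1 else 0) - t * u i with hPdef
  have hAu : A.mulVec u = c := by
    rw [hudef, Matrix.mulVec_mulVec, hAN, Matrix.one_mulVec]
  have hTA : T = A * (1 + U) := by
    ext i j
    have h1 : (A * (1 + U)) i j = A i j + A.mulVec u i := by
      rw [Matrix.mul_apply]
      have hterm : ∀ k, A i k * ((1 + U) k j)
          = A i k * (if k = j then 1 else 0) + A i k * u k := by
        intro k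
        simp only [Matrix.add_apply, Matrix.one_apply, hUdef, Matrix.of_apply]
        ring
      rw [Finset.sum_congr rfl fun k _ => hterm k, Finset.sum_add_distrib]
      have e1 : ∑ k, A i k * (if k = j then 1 else 0) = A i j := by
        simp only [mul_ite, mul_one, mul_zero, Finset.sum_ite_eq', Finset.mem_univ, if_true]
      have e2 : ∑ k, A i k * u k = A.mulVec u i := by
        simp [Matrix.mulVec, dotProduct]
      rw [e1, e2]
    have h2 : T i j = A i j + c i := by
      rw [hTdef, hAdef]
      simp only [Matrix.sub_apply, Matrix.add_apply, Matrix.diagonal_mul, hcdef]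
      rw [hBapp]
      ring
    rw [h1, h2, hAu]
  have hUP : (1 + U) * P = 1 := by
    ext i j
    rw [Matrix.mul_apply]
    have hterm : ∀ k, ((1 + U) i k) * (P k j)
        = ((if i = k then (1:ℝ) else 0) * (if k = j then 1 else 0)
            - (if i = k then (1:ℝ) else 0) * (t * u k))
          + ((if k = j then (1:ℝ) else 0) * u i - u i * (t * u k)) := by
      intro k
      simp only [Matrix.add_apply, Matrix.one_apply, hUdef, hPdef, Matrix.of_apply]
      ring
    rw [Finset.sum_congr rfl fun k _ => hterm k, Finset.sum_add_distrib,
      Finset.sum_sub_distrib, Finset.sum_sub_distrib]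
    have e1 : ∑ k, (if i = k then (1:ℝ) else 0) * (if k = j then 1 else 0)
        = if i = j then 1 else 0 := by
      simp only [ite_mul, one_mul, zero_mul, Finset.sum_ite_eq, Finset.mem_univ, if_true]
    have e2 : ∑ k, (if i = k then (1:ℝ) else 0) * (t * u k) = t * u i := by
      simp only [ite_mul, one_mul, zero_mul, Finset.sum_ite_eq, Finset.mem_univ, if_true]
    have e3 : ∑ k, (if k = j then (1:ℝ) else 0) * u i = u i := by
      simp only [ite_mul, one_mul, zero_mul, Finset.sum_ite_eq', Finset.mem_univ, if_true]
    have e4 : ∑ k, u i * (t * u k) = u i * (t * σ) := by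
      rw [← Finset.mul_sum, ← Finset.mul_sum]
    rw [e1, e2, e3, e4, Matrix.one_apply]
    have htσ : t * σ = 1 - t := by nlinarith
    rw [htσ]
    ring
  have hTX : T * (P * N) = 1 := by
    rw [hTA, ← Matrix.mul_assoc, Matrix.mul_assoc A (1 + U) P, hUP, Matrix.mul_one, hAN]
  have hTunit : IsUnit T.det := Matrix.isUnit_det_of_right_inverse hTX
  have hTinv : T⁻¹ = P * N := Matrix.inv_eq_right_inv hTX
  refine ⟨hTunit, hAunit, ?_⟩
  have hPnorm : linftyNorm P ≤ (n:ℝ) - 1 := by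
    refine linftyNorm_le _ fun i => ?_
    have hsplit : ∑ j, ‖P i j‖ = ‖P i i‖ + ∑ j ∈ Finset.univ.erase i, ‖P i j‖ :=
      (Finset.add_sum_erase _ _ (Finset.mem_univ i)).symm
    have hPii : ‖P i i‖ = 1 - t * u i := by
      have h : P i i = 1 - t * u i := by simp [hPdef]
      rw [h, Real.norm_eq_abs, abs_of_nonneg (by linarith [htu1 i])]
    have hPij : ∀ j, j ≠ i → ‖P i j‖ = t * u i := by
      intro j hj
      have h : P i j = -(t * u i) := by
        simp only [hPdef, Matrix.of_apply, if_neg (Ne.symm hj)]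
        ring
      rw [h, Real.norm_eq_abs, abs_neg, abs_of_nonneg (htu0 i)]
    have hsum : ∑ j ∈ Finset.univ.erase i, ‖P i j‖ = ((n:ℝ) - 1) * (t * u i) := by
      rw [Finset.sum_congr rfl fun j hj => hPij j (Finset.ne_of_mem_erase hj)]
      rw [Finset.sum_const, Finset.card_erase_of_mem (Finset.mem_univ i), Finset.card_univ,
        Fintype.card_fin, nsmul_eq_mul, Nat.cast_sub (by omega : 1 ≤ n), Nat.cast_one]
    rw [hsplit, hPii, hsum]
    have hcast : (2:ℝ) ≤ (n:ℝ) := by exact_mod_cast hn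
    nlinarith [htu0 i, htu1 i]
  rw [hTinv]
  calc linftyNorm (P * N) ≤ linftyNorm P * linftyNorm N := linftyNorm_mul_le P N
    _ ≤ ((n:ℝ) - 1) * linftyNorm N :=
        mul_le_mul_of_nonneg_right hPnorm (linftyNorm_nonneg N)
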